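/- Let L and M be linear orders and n ∈ ℕ. If L order-embeds into M and M has Hausdorff rank at most n, then L has Hausdorff rank at most n. -/

import Mathlib

/-- The `n`-block relation `F^n_L`: `F^0_L` is equality, and `F^{n+1}_L x y` holds iff
only finitely many `F^n_L`-equivalence classes contain a point of the closed interval
between `x` and `y`. -/
def nBlockRel {L : Type*} [LinearOrder L] : ℕ → L → L → Prop
  | 0, x, y => x = y
  | n + 1, x, y =>
      {C : Set L | (∃ w : L, C = {z | nBlockRel n w z}) ∧ (C ∩ Set.uIcc x y).Nonempty}.Finite

theorem classEq {L : Type*} {r : L → L → Prop} (hr : Equivalence r) {w z : L} (h : r w z) :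
    {u | r w u} = {u | r z u} := by
  ext u
  exact ⟨fun hu => hr.trans (hr.symm h) hu, fun hu => hr.trans h hu⟩

theorem nBlockRel_equiv {L : Type*} [LinearOrder L] :
    ∀ n : ℕ, Equivalence (nBlockRel (L := L) n) := by
  intro n
  induction n with
  | zero => exact ⟨fun _ => rfl, fun h => h.symm, fun h h' => h.trans h'⟩
  | succ n ih =>
    constructor
    · intro x
      show Set.Finite _
      apply Set.Finite.subset (Set.finite_singleton {z | nBlockRel n x z})
      rintro C ⟨⟨w, rfl⟩, z, hz1, hz2⟩
      simp only [Set.uIcc_self, Set.mem_singleton_iff] at hz2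
      subst hz2
      exact classEq ih hz1
    · intro x y hxy
      show Set.Finite _
      have hxy : {C : Set L | (∃ w : L, C = {z | nBlockRel n w z}) ∧ (C ∩ Set.uIcc x y).Nonempty}.Finite := hxy
      simpa only [Set.uIcc_comm] using hxy
    · intro x y z hxy hyz
      show Set.Finite _
      apply Set.Finite.subset (hxy.union hyz)
      rintro C ⟨⟨w, rfl⟩, u, hu1, hu2⟩
      have := Set.uIcc_subset_uIcc_union_uIcc (a := x) (b := y) (c := z) hu2
      rcases this with h | h
      · exact Or.inl ⟨⟨w, rfl⟩, u, hu1, h⟩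
      · exact Or.inr ⟨⟨w, rfl⟩, u, hu1, h⟩

theorem nBlockRel_of_embed {L M : Type*} [LinearOrder L] [LinearOrder M] (f : L ↪o M) :
    ∀ n : ℕ, ∀ x y : L, nBlockRel n (f x) (f y) → nBlockRel n x y := by
  intro n
  induction n with
  | zero => exact fun x y h => f.injective h
  | succ n ih =>
    intro x y hfin
    classical
    show Set.Finite _
    have hmem : ∀ z : L, z ∈ Set.uIcc x y → f z ∈ Set.uIcc (f x) (f y) := by
      intro z hz
      rw [Set.mem_uIcc] at hz ⊢
      rcases hz with ⟨h1, h2⟩ | ⟨h1, h2⟩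
      · exact Or.inl ⟨f.le_iff_le.mpr h1, f.le_iff_le.mpr h2⟩
      · exact Or.inr ⟨f.le_iff_le.mpr h1, f.le_iff_le.mpr h2⟩
    set g : Set L → Set M := fun C =>
      if h : (C ∩ Set.uIcc x y).Nonempty then {u | nBlockRel n (f h.choose) u} else ∅ with hg
    apply Set.Finite.of_finite_image (f := g)
    · apply Set.Finite.subset hfin
      rintro D ⟨C, ⟨⟨w, rfl⟩, hne⟩, rfl⟩
      rw [hg]
      simp only [dif_pos hne]
      refine ⟨⟨f hne.choose, rfl⟩, f hne.choose, (nBlockRel_equiv n).refl _,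
        hmem _ hne.choose_spec.2⟩
    · rintro C ⟨⟨w, rfl⟩, hne⟩ C' ⟨⟨w', rfl⟩, hne'⟩ heq
      rw [hg] at heq
      simp only [dif_pos hne, dif_pos hne'] at heq
      have h1 : nBlockRel n (f hne.choose) (f hne'.choose) := by
        have : f hne'.choose ∈ {u | nBlockRel n (f hne'.choose) u} := (nBlockRel_equiv n).refl _
        rw [← heq] at this
        exact this
      have h2 : nBlockRel n hne.choose hne'.choose := ih _ _ h1
      have e1 : {z | nBlockRel n w z} = {z | nBlockRel n hne.choose z} :=
        classEq (nBlockRel_equiv n) hne.choose_spec.1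
      have e2 : {z | nBlockRel n w' z} = {z | nBlockRel n hne'.choose z} :=
        classEq (nBlockRel_equiv n) hne'.choose_spec.1
      rw [e1, e2, classEq (nBlockRel_equiv n) h2]

/-- If `L` order-embeds into `M` and `M` has Hausdorff rank at most `n`
(i.e. `F^n_M` holds of every pair), then `L` has Hausdorff rank at most `n`. -/
theorem hausdorffRank_le_of_embeds {L M : Type*} [LinearOrder L] [LinearOrder M]
    (n : ℕ) (h : Nonempty (L ↪o M)) (hM : ∀ x y : M, nBlockRel n x y) :
    ∀ x y : L, nBlockRel n x y := by
  obtain ⟨f⟩ := h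
  exact fun x y => nBlockRel_of_embed f n x y (hM (f x) (f y))
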